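/- Let γ, α, β, δ, ξ, c > 0 with 0 < α < 1, ξ > 1/(1 − α) and γ < 1 + αξ. The slope of the prey nullcline at x = 0 is f′(0) = 1 − (1 + αξ)/γ and the slope of the predator nullcline at x = 0 is g′(0) = β(1 + αξ − ξ)/(cξ(1 + αξ)²), and these two slopes are equal if and only if c = c* := βγ(1 + αξ − ξ)/(ξ(1 + αξ)²[γ − (1 + αξ)]); moreover c* > 0 (this is the pitchfork bifurcation value of the competition parameter). -/

import Mathlib

/-- **Theorem thm:pc1, pitchfork bifurcation value.**
For system (AFC) with γ, α, β, δ, ξ, c > 0, 0 < α < 1, ξ > 1/(1 − α) and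
γ < 1 + αξ: the slope of the prey nullcline f(x) = (1 − x/γ)(1 + αξ + x) at
x = 0 is 1 − (1 + αξ)/γ, the slope of the predator nullcline
g(x) = β(x + ξ)/(cξ(1 + αξ + x)) − δ/(cξ) at x = 0 is
β(1 + αξ − ξ)/(cξ(1 + αξ)²), these slopes are equal if and only if
c = c* = βγ(1 + αξ − ξ)/(ξ(1 + αξ)²[γ − (1 + αξ)]), and c* > 0. -/
theorem stmt_15 (γ α β δ ξ c : ℝ)
    (hγ : 0 < γ) (hα : 0 < α) (hβ : 0 < β) (hδ : 0 < δ) (hξ : 0 < ξ) (hc : 0 < c)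
    (hα1 : α < 1) (hξbig : 1 / (1 - α) < ξ) (hγsmall : γ < 1 + α * ξ)
    (cstar : ℝ)
    (hcstar : cstar = β * γ * (1 + α * ξ - ξ) /
      (ξ * (1 + α * ξ) ^ 2 * (γ - (1 + α * ξ)))) :
    deriv (fun x : ℝ => (1 - x / γ) * (1 + α * ξ + x)) 0
        = 1 - (1 + α * ξ) / γ ∧
    deriv (fun x : ℝ => β * (x + ξ) / (c * ξ * (1 + α * ξ + x)) - δ / (c * ξ)) 0
        = β * (1 + α * ξ - ξ) / (c * ξ * (1 + α * ξ) ^ 2) ∧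
    (1 - (1 + α * ξ) / γ = β * (1 + α * ξ - ξ) / (c * ξ * (1 + α * ξ) ^ 2) ↔
      c = cstar) ∧
    0 < cstar := by
  have hA : 0 < 1 + α * ξ := by positivity
  have hα1' : 0 < 1 - α := by linarith
  have hneg : 1 + α * ξ - ξ < 0 := by
    have h := (div_lt_iff₀ hα1').mp hξbig
    nlinarith
  have hγA : γ - (1 + α * ξ) < 0 := by linarith
  have hγ0 : γ ≠ 0 := ne_of_gt hγ
  have hξ0 : ξ ≠ 0 := ne_of_gt hξ
  have hc0 : c ≠ 0 := ne_of_gt hc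
  have hA0 : (1 + α * ξ) ≠ 0 := ne_of_gt hA
  have hden : c * ξ * (1 + α * ξ + 0) ≠ 0 := by
    rw [add_zero]; positivity
  refine ⟨?_, ?_, ?_, ?_⟩
  · have h1 : HasDerivAt (fun x : ℝ => (1 - x / γ) * (1 + α * ξ + x))
        ((-(1 / γ)) * (1 + α * ξ + 0) + (1 - 0 / γ) * 1) 0 := by
      have ha : HasDerivAt (fun x : ℝ => 1 - x / γ) (-(1 / γ)) 0 := by
        simpa using ((hasDerivAt_id (0:ℝ)).div_const γ).const_sub 1
      have hb : HasDerivAt (fun x : ℝ => 1 + α * ξ + x) 1 0 := by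
        simpa using (hasDerivAt_id (0:ℝ)).const_add (1 + α * ξ)
      exact ha.mul hb
    rw [h1.deriv]
    field_simp
    ring
  · have hnum : HasDerivAt (fun x : ℝ => β * (x + ξ)) β 0 := by
      simpa using ((hasDerivAt_id (0:ℝ)).add_const ξ).const_mul β
    have hdenf : HasDerivAt (fun x : ℝ => c * ξ * (1 + α * ξ + x)) (c * ξ) 0 := by
      simpa using ((hasDerivAt_id (0:ℝ)).const_add (1 + α * ξ)).const_mul (c * ξ)
    have h2 : HasDerivAt (fun x : ℝ => β * (x + ξ) / (c * ξ * (1 + α * ξ + x)) - δ / (c * ξ)) _ 0 :=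
      (hnum.div hdenf hden).sub_const (δ / (c * ξ))
    rw [h2.deriv]
    field_simp
    ring
  · have hD0 : ξ * (1 + α * ξ) ^ 2 * (γ - (1 + α * ξ)) ≠ 0 :=
      ne_of_lt (mul_neg_of_pos_of_neg (by positivity) hγA)
    rw [hcstar, eq_div_iff hD0]
    constructor
    · intro h
      field_simp at h
      linarith [h]
    · intro h
      field_simp
      linarith [h]
  · rw [hcstar]
    exact div_pos_of_neg_of_neg
      (mul_neg_of_pos_of_neg (mul_pos hβ hγ) hneg)
      (mul_neg_of_pos_of_neg (by positivity) hγA)
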